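/- Let α be irrational and f : ℝ/ℤ → ℝ/ℤ the rotation x ↦ x + α. Then the induced hyperspace system (2^{ℝ/ℤ}, 2^f) does not have first weak shadowing (hence neither orbital nor strong orbital shadowing). -/

import Mathlib

open Filter Topology TopologicalSpace

/-- The induced map on the hyperspace of nonempty compact subsets. -/
def hyperMap {X : Type*} [MetricSpace X] (f : X → X) (hf : Continuous f) :
    NonemptyCompacts X → NonemptyCompacts X :=
  fun A => ⟨⟨f '' A, A.isCompact.image hf⟩, A.nonempty.image f⟩

open Metric Set

private lemma AC.dist_coe_le (x y : ℝ) :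
    dist ((x : AddCircle (1:ℝ))) ((y : AddCircle (1:ℝ))) ≤ |x - y| := by
  rw [dist_eq_norm, ← QuotientAddGroup.mk_sub]
  calc ‖((x - y : ℝ) : AddCircle (1:ℝ))‖ ≤ ‖x - y‖ := QuotientAddGroup.norm_mk_le_norm
    _ = |x - y| := Real.norm_eq_abs _

private lemma AC.dist_half : dist (((0:ℝ) : AddCircle (1:ℝ))) (((1/2:ℝ) : AddCircle (1:ℝ))) = 1/2 := by
  rw [dist_eq_norm, ← QuotientAddGroup.mk_sub, AddCircle.norm_eq]
  norm_num [round_eq]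

private lemma AC.surj (a : ℝ) (z : AddCircle (1:ℝ)) :
    ∃ x ∈ Icc a (a+1), (x : AddCircle (1:ℝ)) = z := by
  let b := QuotientAddGroup.equivIcoMod (one_pos (α := ℝ)) a z
  exact ⟨b.1, ⟨b.2.1, b.2.2.le⟩, (QuotientAddGroup.equivIcoMod one_pos a).symm_apply_apply z⟩

private lemma hyperMap_iter_coe {X : Type*} [MetricSpace X] (f : X → X) (hf : Continuous f)
    (B : NonemptyCompacts X) (n : ℕ) :
    (((hyperMap f hf)^[n] B : NonemptyCompacts X) : Set X) = f^[n] '' (B : Set X) := by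
  induction n with
  | zero => simp
  | succ n ih =>
      rw [Function.iterate_succ_apply']
      show f '' (((hyperMap f hf)^[n] B : NonemptyCompacts X) : Set X) = _
      rw [ih, ← Set.image_comp, ← Function.iterate_succ']

theorem circle_rotation_hyperspace_not_firstWeakShadowing
    (α : ℝ) (hα : Irrational α) :
    ¬ (∀ ε > (0:ℝ), ∃ δ > (0:ℝ), ∀ A : ℕ → NonemptyCompacts (AddCircle (1:ℝ)),
      (∀ i, dist (hyperMap (fun x => x + (α : AddCircle (1:ℝ)))
          (continuous_add_right _) (A i)) (A (i + 1)) < δ) →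
      ∃ B : NonemptyCompacts (AddCircle (1:ℝ)),
        ∀ i, ∃ n : ℕ,
          dist ((hyperMap (fun x => x + (α : AddCircle (1:ℝ)))
            (continuous_add_right _))^[n] B) (A i) < ε) := by
  intro h
  obtain ⟨δ, hδ, H⟩ := h (1/16) (by norm_num)
  set f := fun x : AddCircle (1:ℝ) => x + (α : AddCircle (1:ℝ)) with hf_def
  have hfc : Continuous f := continuous_add_right _
  -- radii
  set r : ℕ → ℝ := fun i => min ((i:ℝ) * (δ/2)) (1/2) with hr_def
  have hr_nonneg : ∀ i, 0 ≤ r i := fun i =>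
    le_min (by positivity) (by norm_num)
  have hr_mono : ∀ i, r i ≤ r (i+1) := by
    intro i
    refine min_le_min ?_ le_rfl
    have : (i:ℝ) ≤ (i:ℝ) + 1 := by linarith
    push_cast
    nlinarith
  have hr_step : ∀ i, r (i+1) ≤ r i + δ/2 := by
    intro i
    have : r (i+1) ≤ min ((i:ℝ) * (δ/2) + δ/2) (1/2 + δ/2) := by
      refine le_min ?_ ?_
      · refine (min_le_left _ _).trans ?_; push_cast; nlinarith
      · refine (min_le_right _ _).trans ?_; linarith
    rw [min_add_add_right] at this
    exact this
  -- the pseudo-orbit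
  set S : ℕ → Set (AddCircle (1:ℝ)) :=
    fun i => (fun x : ℝ => (x : AddCircle (1:ℝ))) '' Icc ((i:ℝ) * α - r i) ((i:ℝ) * α + r i)
    with hS_def
  have hS_compact : ∀ i, IsCompact (S i) := fun i =>
    isCompact_Icc.image (AddCircle.continuous_mk' 1)
  have hS_ne : ∀ i, (S i).Nonempty := fun i =>
    (Set.nonempty_Icc.2 (by linarith [hr_nonneg i])).image _
  set A : ℕ → NonemptyCompacts (AddCircle (1:ℝ)) :=
    fun i => ⟨⟨S i, hS_compact i⟩, hS_ne i⟩ with hA_def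
  -- Hausdorff distance bound between nested arcs
  have key : ∀ (c ρ σ : ℝ), 0 ≤ ρ → ρ ≤ σ →
      hausdorffDist ((fun x : ℝ => (x : AddCircle (1:ℝ))) '' Icc (c - ρ) (c + ρ))
        ((fun x : ℝ => (x : AddCircle (1:ℝ))) '' Icc (c - σ) (c + σ)) ≤ σ - ρ := by
    intro c ρ σ hρ hρσ
    apply hausdorffDist_le_of_mem_dist (by linarith)
    · rintro x ⟨t, ht, rfl⟩
      exact ⟨t, ⟨t, ⟨by linarith [ht.1], by linarith [ht.2]⟩, rfl⟩, by rw [dist_self]; linarith⟩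
    · rintro x ⟨t, ht, rfl⟩
      refine ⟨(max (c - ρ) (min t (c + ρ)) : ℝ),
        ⟨max (c - ρ) (min t (c + ρ)), ⟨le_max_left _ _,
          max_le (by linarith) (min_le_right _ _)⟩, rfl⟩, ?_⟩
      refine (AC.dist_coe_le _ _).trans ?_
      rcases le_total t (c - ρ) with h1 | h1
      · rw [min_eq_left (by linarith), max_eq_left (by linarith)]
        rw [abs_sub_comm, abs_of_nonneg (by linarith)]
        linarith [ht.1]
      · rcases le_total t (c + ρ) with h2 | h2
        · rw [min_eq_left h2, max_eq_right h1]
          simp [abs_of_nonneg]; linarith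
        · rw [min_eq_right h2, max_eq_right (by linarith)]
          rw [abs_of_nonneg (by linarith)]
          linarith [ht.2]
  -- pseudo-orbit property
  have hpo : ∀ i, dist (hyperMap f hfc (A i)) (A (i + 1)) < δ := by
    intro i
    have himg : ((hyperMap f hfc (A i) : NonemptyCompacts _) : Set (AddCircle (1:ℝ)))
        = (fun x : ℝ => (x : AddCircle (1:ℝ))) ''
            Icc (((i:ℝ)+1) * α - r i) (((i:ℝ)+1) * α + r i) := by
      show f '' S i = _
      rw [hS_def]
      rw [← Set.image_comp]
      have : (f ∘ fun x : ℝ => (x : AddCircle (1:ℝ)))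
          = (fun x : ℝ => (x : AddCircle (1:ℝ))) ∘ (fun x : ℝ => x + α) := by
        funext x
        show (x : AddCircle (1:ℝ)) + (α : AddCircle (1:ℝ)) = ((x + α : ℝ) : AddCircle (1:ℝ))
        exact (QuotientAddGroup.mk_add _ _ _).symm
      rw [this, Set.image_comp]
      congr 1
      rw [Set.image_add_const_Icc]
      congr 1 <;> ring
    have hAi1 : ((A (i+1) : NonemptyCompacts _) : Set (AddCircle (1:ℝ)))
        = (fun x : ℝ => (x : AddCircle (1:ℝ))) ''
            Icc (((i:ℝ)+1) * α - r (i+1)) (((i:ℝ)+1) * α + r (i+1)) := by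
      show S (i+1) = _
      rw [hS_def]
      push_cast
      ring_nf
    rw [NonemptyCompacts.dist_eq, himg, hAi1]
    calc hausdorffDist _ _ ≤ r (i+1) - r i := key _ _ _ (hr_nonneg i) (hr_mono i)
      _ ≤ δ/2 := by linarith [hr_step i]
      _ < δ := by linarith
  obtain ⟨B, hB⟩ := H A hpo
  -- the two witnesses
  set N : ℕ := ⌈1/δ⌉₊ with hN_def
  have hrN : r N = 1/2 := by
    have h1 : (1:ℝ)/δ ≤ (N:ℝ) := Nat.le_ceil _
    have : (1:ℝ)/2 ≤ (N:ℝ) * (δ/2) := by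
      rw [div_le_iff₀ hδ] at h1
      nlinarith
    exact min_eq_right this
  obtain ⟨n, hn⟩ := hB 0
  obtain ⟨m, hm⟩ := hB N
  set G := (hyperMap f hfc)^[n] B with hG_def
  set Hm := (hyperMap f hfc)^[m] B with hHm_def
  -- description of A 0 and A N
  have hA0 : ((A 0 : NonemptyCompacts _) : Set (AddCircle (1:ℝ)))
      = {((0:ℝ) : AddCircle (1:ℝ))} := by
    show S 0 = _
    rw [hS_def]
    norm_num [hr_def, Set.Icc_self]
  have hAN : ∀ z : AddCircle (1:ℝ), z ∈ ((A N : NonemptyCompacts _) : Set (AddCircle (1:ℝ))) := by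
    intro z
    obtain ⟨x, hx, hxz⟩ := AC.surj ((N:ℝ) * α - 1/2) z
    refine ⟨x, ?_, hxz⟩
    rw [hrN]
    exact ⟨hx.1, by linarith [hx.2]⟩
  -- extraction
  have hfin1 : EMetric.hausdorffEdist (G : Set (AddCircle (1:ℝ))) ((A 0 : NonemptyCompacts _) : Set _) ≠ ⊤ :=
    hausdorffEdist_ne_top_of_nonempty_of_bounded G.nonempty (A 0).nonempty
      G.isCompact.isBounded (A 0).isCompact.isBounded
  have hfin2 : EMetric.hausdorffEdist (Hm : Set (AddCircle (1:ℝ))) ((A N : NonemptyCompacts _) : Set _) ≠ ⊤ :=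
    hausdorffEdist_ne_top_of_nonempty_of_bounded Hm.nonempty (A N).nonempty
      Hm.isCompact.isBounded (A N).isCompact.isBounded
  rw [NonemptyCompacts.dist_eq] at hn hm
  -- iterated map is an isometry on points
  have hiter_isom : ∀ (k : ℕ) (x y : AddCircle (1:ℝ)), dist (f^[k] x) (f^[k] y) = dist x y := by
    intro k
    induction k with
    | zero => intro x y; simp
    | succ k ih =>
        intro x y
        rw [Function.iterate_succ_apply', Function.iterate_succ_apply']
        show dist (f^[k] x + _) (f^[k] y + _) = _
        rw [dist_add_right]
        exact ih x y
  -- points near 0 and 1/2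
  obtain ⟨y1, hy1G, hy1⟩ := exists_dist_lt_of_hausdorffDist_lt'
      (hAN ((0:ℝ) : AddCircle (1:ℝ))) hm hfin2
  obtain ⟨y2, hy2G, hy2⟩ := exists_dist_lt_of_hausdorffDist_lt'
      (hAN (((1:ℝ)/2 : ℝ) : AddCircle (1:ℝ))) hm hfin2
  rw [hHm_def, hyperMap_iter_coe] at hy1G hy2G
  obtain ⟨b1, hb1, rfl⟩ := hy1G
  obtain ⟨b2, hb2, rfl⟩ := hy2G
  -- b1, b2 are far apart
  have hfar : (3:ℝ)/8 < dist b1 b2 := by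
    have h12 : dist (f^[m] b1) (f^[m] b2) > 1/2 - 1/16 - 1/16 := by
      have := dist_triangle ((0:ℝ) : AddCircle (1:ℝ)) (f^[m] b1) (f^[m] b2)
      have := dist_triangle (f^[m] b1) (((1:ℝ)/2 : ℝ) : AddCircle (1:ℝ)) (f^[m] b2)
      have h0half := AC.dist_half
      have t1 := dist_triangle (((0:ℝ):ℝ) : AddCircle (1:ℝ)) (f^[m] b1) ((((1:ℝ)/2:ℝ)) : AddCircle (1:ℝ))
      have t2 := dist_triangle (f^[m] b1) (f^[m] b2) ((((1:ℝ)/2:ℝ)) : AddCircle (1:ℝ))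
      have e1 : dist ((0:ℝ) : AddCircle (1:ℝ)) (f^[m] b1) < 1/16 := by
        rw [dist_comm]; exact hy1
      have e2 : dist (f^[m] b2) ((((1:ℝ)/2:ℝ)) : AddCircle (1:ℝ)) < 1/16 := hy2
      nlinarith [dist_nonneg (x := f^[m] b1) (y := f^[m] b2)]
    rw [hiter_isom m b1 b2] at h12
    linarith
  -- b1, b2 are close together
  have hclose : dist b1 b2 < (1:ℝ)/8 := by
    have hmem1 : f^[n] b1 ∈ (G : Set (AddCircle (1:ℝ))) := by
      rw [hG_def, hyperMap_iter_coe]; exact ⟨b1, hb1, rfl⟩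
    have hmem2 : f^[n] b2 ∈ (G : Set (AddCircle (1:ℝ))) := by
      rw [hG_def, hyperMap_iter_coe]; exact ⟨b2, hb2, rfl⟩
    obtain ⟨z1, hz1, hdz1⟩ := exists_dist_lt_of_hausdorffDist_lt hmem1 hn hfin1
    obtain ⟨z2, hz2, hdz2⟩ := exists_dist_lt_of_hausdorffDist_lt hmem2 hn hfin1
    rw [hA0, Set.mem_singleton_iff] at hz1 hz2
    subst hz1; subst hz2
    have e2 : dist (((0:ℝ)) : AddCircle (1:ℝ)) (f^[n] b2) < 1/16 := by
      rw [dist_comm]; exact hdz2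
    have h' : dist (f^[n] b1) (f^[n] b2) < 1/8 := by
      calc dist (f^[n] b1) (f^[n] b2)
          ≤ dist (f^[n] b1) (((0:ℝ)) : AddCircle (1:ℝ))
            + dist (((0:ℝ)) : AddCircle (1:ℝ)) (f^[n] b2) := dist_triangle _ _ _
        _ < 1/8 := by linarith
    rw [hiter_isom n b1 b2] at h'
    exact h'
  linarith
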